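/- Let C1, C2, C3, C4 be binary linear codes of length n with C2⊥ ⊆ C1, C4⊥ ⊆ C3, and coset-representative matrices A (for C1/C2⊥) and B (for C3/C4⊥). If every row of A is orthogonal to C4⊥ (i.e. rowspace(A) ⊆ C4), C3 ⊆ C2, and ABᵀ = I_k, then for all ψ^A, ψ^B ∈ F_2^k, y ∈ C2⊥, z ∈ C4⊥ we have (ψ^A A)·z + y·(ψ^B B + z) = 0, so the pair of CSS codes is CZ-transversal. -/

import Mathlib

open Matrix

/-- The dual code of a binary linear code, w.r.t. the standard bilinear form. -/
def dualCode {n : ℕ} (S : Submodule (ZMod 2) (Fin n → ZMod 2)) :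
    Submodule (ZMod 2) (Fin n → ZMod 2) where
  carrier := {v | ∀ u ∈ S, u ⬝ᵥ v = 0}
  add_mem' := by
    intro a b ha hb u hu
    simp [dotProduct_add, ha u hu, hb u hu]
  zero_mem' := by intro u hu; simp
  smul_mem' := by
    intro c a ha u hu
    simp [dotProduct_smul, ha u hu]

lemma vecMul_eq_sum' {n k : ℕ} (v : Fin k → ZMod 2) (M : Matrix (Fin k) (Fin n) (ZMod 2)) :
    v ᵥ* M = ∑ i, v i • M i := by
  ext j
  simp [Matrix.vecMul, dotProduct, Finset.sum_apply]

/-- sufficiency condition (18) of Corollary 1: if the rows of `A` are orthogonal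
to `C4perp`, `C3 ⊆ C2`, and `A * Bᵀ = I`, then the CZ phase condition holds. -/
theorem cz_transversal_sufficient_first {n k : ℕ}
    (C1 C2perp C3 C4perp : Submodule (ZMod 2) (Fin n → ZMod 2))
    (A B : Matrix (Fin k) (Fin n) (ZMod 2))
    (h21 : C2perp ≤ C1) (h43 : C4perp ≤ C3)
    (h1 : C1 = C2perp ⊔ Submodule.span (ZMod 2) (Set.range (fun i => A i)))
    (h3 : C3 = C4perp ⊔ Submodule.span (ZMod 2) (Set.range (fun i => B i)))
    (hArows : ∀ i : Fin k, ∀ z ∈ C4perp, A i ⬝ᵥ z = 0)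
    (hC3C2 : C3 ≤ dualCode C2perp)
    (hAB : A * B.transpose = 1) :
    ∀ (ψA ψB : Fin k → ZMod 2), ∀ y ∈ C2perp, ∀ z ∈ C4perp,
      (ψA ᵥ* A) ⬝ᵥ z + y ⬝ᵥ (ψB ᵥ* B + z) = 0 := by
  intro psiA psiB y hy z hz
  have h1' : (psiA ᵥ* A) ⬝ᵥ z = 0 := by
    rw [vecMul_eq_sum']
    rw [show (∑ i : Fin k, psiA i • A i) ⬝ᵥ z = ∑ i : Fin k, (psiA i • A i) ⬝ᵥ z by simp [dotProduct, Finset.sum_apply, Finset.mul_sum, Finset.sum_mul]; rw [Finset.sum_comm]]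
    refine Finset.sum_eq_zero fun i _ => ?_
    rw [smul_dotProduct, hArows i z hz, smul_zero]
  have hmem : psiB ᵥ* B + z ∈ C3 := by
    rw [h3]
    refine Submodule.add_mem _ ?_ (Submodule.mem_sup_left hz)
    refine Submodule.mem_sup_right ?_
    rw [vecMul_eq_sum']
    exact Submodule.sum_mem _ fun i _ =>
      Submodule.smul_mem _ _ (Submodule.subset_span ⟨i, rfl⟩)
  have h2' : y ⬝ᵥ (psiB ᵥ* B + z) = 0 := hC3C2 hmem y hy
  rw [h1', h2', add_zero]
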